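/- Let F be a finite field of characteristic 2 and order q = 2^n with n odd, and let d be an invertible exponent over F. Then there exists some a ∈ F with a ≠ 0 such that |W_{F,d}(a)| ≥ √(2q). -/

import Mathlib

open scoped BigOperators

/-- The canonical additive character of a finite field `F` of characteristic `p`:
`ψ(x) = exp(2πi·Tr(x)/p)`, where `Tr` is the absolute trace from `F` to `𝔽_p = ZMod p`. -/
noncomputable def canonicalPsi (F : Type*) [Field F] [Fintype F] (p : ℕ) [CharP F p]
    (x : F) : ℂ :=
  letI : Algebra (ZMod p) F := ZMod.algebra F p
  Complex.exp (2 * Real.pi * Complex.I * ((Algebra.trace (ZMod p) F x).val : ℂ) / (p : ℂ))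

/-- The Weil sum `W_{F,d}(a) = ∑_{x ∈ F} ψ(x^d − a·x)`. -/
noncomputable def weilSum (F : Type*) [Field F] [Fintype F] (p : ℕ) [CharP F p]
    (d : ℕ) (a : F) : ℂ :=
  ∑ x : F, canonicalPsi F p (x ^ d - a * x)

set_option linter.unusedSectionVars false
set_option linter.unusedVariables false
open scoped Classical

section Aux

variable (F : Type*) [Field F] [Fintype F] [CharP F 2]

/-- absolute trace to `ZMod 2`. -/
noncomputable def trF (x : F) : ZMod 2 :=
  letI : Algebra (ZMod 2) F := ZMod.algebra F 2
  Algebra.trace (ZMod 2) F x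

/-- real-valued canonical character. -/
noncomputable def psir (x : F) : ℝ := (-1 : ℝ) ^ (trF F x).val

lemma canonicalPsi_eq (x : F) : canonicalPsi F 2 x = (psir F x : ℂ) := by
  letI : Algebra (ZMod 2) F := ZMod.algebra F 2
  rw [canonicalPsi, psir, trF]
  have h : 2 * (Real.pi : ℂ) * Complex.I * (((Algebra.trace (ZMod 2) F x).val : ℕ) : ℂ) / ((2:ℕ) : ℂ)
      = (((Algebra.trace (ZMod 2) F x).val : ℕ) : ℂ) * ((Real.pi : ℂ) * Complex.I) := by
    push_cast; ring
  rw [h, Complex.exp_nat_mul, Complex.exp_pi_mul_I]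
  push_cast; ring

variable {F}

lemma trF_add (x y : F) : trF F (x + y) = trF F x + trF F y := by
  rw [trF, trF, trF]; exact map_add _ x y

lemma trF_zero : trF F 0 = 0 := by
  rw [trF]; exact map_zero _

lemma psir_add (x y : F) : psir F (x + y) = psir F x * psir F y := by
  rw [psir, psir, psir, trF_add, ZMod.val_add, ← pow_add]
  exact (neg_one_pow_eq_pow_mod_two _).symm

lemma psir_zero : psir F 0 = 1 := by
  have h : ((0 : ZMod 2)).val = 0 := rfl
  rw [psir, trF_zero, h, pow_zero]

lemma trF_surj : ∃ b : F, trF F b = 1 := by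
  letI : Algebra (ZMod 2) F := ZMod.algebra F 2
  have : FiniteDimensional (ZMod 2) F := Module.Finite.of_finite
  obtain ⟨b, hb⟩ := Algebra.trace_surjective (ZMod 2) F 1
  exact ⟨b, hb⟩

lemma sum_psir_eq_zero : ∑ x : F, psir F x = 0 := by
  obtain ⟨b, hb⟩ := trF_surj (F := F)
  have hre : ∑ x : F, psir F x = ∑ x : F, psir F (x + b) :=
    (Fintype.sum_equiv (Equiv.addRight b) _ _ (fun x => rfl)).symm
  have hpb : psir F b = -1 := by
    have h1 : ((1 : ZMod 2)).val = 1 := rfl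
    rw [psir, hb, h1, pow_one]
  have : ∑ x : F, psir F x = -∑ x : F, psir F x := by
    nth_rewrite 1 [hre]
    rw [← Finset.sum_neg_distrib]
    exact Finset.sum_congr rfl fun x _ => by rw [psir_add, hpb]; ring
  linarith

/-- key orthogonality -/
lemma sum_psir_mul (t : F) :
    ∑ c : F, psir F (c * t) = if t = 0 then (Fintype.card F : ℝ) else 0 := by
  by_cases ht : t = 0
  · simp [ht, psir_zero, Finset.card_univ]
  · rw [if_neg ht]
    have : ∑ c : F, psir F (c * t) = ∑ u : F, psir F u :=
      Fintype.sum_equiv (Equiv.mulRight₀ t ht) _ _ (fun c => rfl)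
    rw [this, sum_psir_eq_zero]

end Aux

section Moments

variable {F : Type*} [Field F] [Fintype F] [CharP F 2]

lemma char2_combine (h : F → F) (a x z y w : F) :
    ((h x - a * x) + (h y - a * y)) + ((h z - a * z) + (h w - a * w))
      = (h x + h z + h y + h w) + a * (x + z + y + w) := by
  simp only [CharTwo.sub_eq_add]
  ring

lemma char2_combine2 (h : F → F) (a x y : F) :
    (h x - a * x) + (h y - a * y) = (h x + h y) + a * (x + y) := by
  simp only [CharTwo.sub_eq_add]
  ring

/-- fourth moment expansion -/
lemma fourth_moment (h : F → F) :
    ∑ a : F, (∑ x : F, psir F (h x - a * x)) ^ 4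
      = ∑ p : F × F × F × F,
          psir F (h p.1 + h p.2.1 + h p.2.2.1 + h p.2.2.2) *
            (if p.1 + p.2.1 + p.2.2.1 + p.2.2.2 = 0 then (Fintype.card F : ℝ) else 0) := by
  have expand : ∀ a : F, (∑ x : F, psir F (h x - a * x)) ^ 4
      = ∑ p : F × F × F × F,
          psir F (h p.1 + h p.2.1 + h p.2.2.1 + h p.2.2.2) *
            psir F (a * (p.1 + p.2.1 + p.2.2.1 + p.2.2.2)) := by
    intro a
    have e1 : (∑ x : F, psir F (h x - a * x)) ^ 4
        = ((∑ x : F, psir F (h x - a * x)) * (∑ x : F, psir F (h x - a * x)))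
          * ((∑ x : F, psir F (h x - a * x)) * (∑ x : F, psir F (h x - a * x))) := by
      ring
    rw [e1, Finset.sum_mul_sum, Finset.sum_mul_sum]
    rw [Fintype.sum_prod_type]
    refine Finset.sum_congr rfl fun x _ => ?_
    rw [Fintype.sum_prod_type]
    refine Finset.sum_congr rfl fun z _ => ?_
    rw [Finset.sum_mul_sum, Fintype.sum_prod_type]
    refine Finset.sum_congr rfl fun y _ => ?_
    refine Finset.sum_congr rfl fun w _ => ?_
    dsimp only
    rw [← psir_add, ← psir_add, ← psir_add, char2_combine h a, psir_add]
  rw [Finset.sum_congr rfl fun a _ => expand a, Finset.sum_comm]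
  refine Finset.sum_congr rfl fun p _ => ?_
  rw [← Finset.mul_sum, sum_psir_mul]

/-- second moment -/
lemma second_moment (h : F → F) :
    ∑ a : F, (∑ x : F, psir F (h x - a * x)) ^ 2
      = (Fintype.card F : ℝ) ^ 2 := by
  have expand : ∀ a : F, (∑ x : F, psir F (h x - a * x)) ^ 2
      = ∑ p : F × F, psir F (h p.1 + h p.2) * psir F (a * (p.1 + p.2)) := by
    intro a
    rw [sq, Finset.sum_mul_sum, Fintype.sum_prod_type]
    refine Finset.sum_congr rfl fun x _ => Finset.sum_congr rfl fun y _ => ?_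
    rw [← psir_add, ← psir_add, char2_combine2]
  rw [Finset.sum_congr rfl fun a _ => expand a, Finset.sum_comm]
  have step : ∀ p : F × F,
      (∑ a : F, psir F (h p.1 + h p.2) * psir F (a * (p.1 + p.2)))
        = if p.2 = p.1 then (Fintype.card F : ℝ) else 0 := by
    intro p
    rw [← Finset.mul_sum, sum_psir_mul]
    have hiff : (p.1 + p.2 = 0) = (p.2 = p.1) := by
      apply propext; constructor
      · intro hp
        have h2 := eq_neg_of_add_eq_zero_right hp
        rwa [CharTwo.neg_eq] at h2
      · intro hp; rw [hp, CharTwo.add_self_eq_zero]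
    rw [hiff]
    by_cases hp : p.2 = p.1
    · rw [hp, show h p.1 + h p.1 = 0 from CharTwo.add_self_eq_zero _, psir_zero, one_mul]
    · rw [if_neg hp, mul_zero]
  rw [Finset.sum_congr rfl fun p _ => step p]
  rw [Fintype.sum_prod_type]
  have hrow : ∀ x : F, (∑ y : F, if y = x then (Fintype.card F : ℝ) else 0)
      = (Fintype.card F : ℝ) := by
    intro x
    rw [Finset.sum_ite_eq' Finset.univ x fun _ => (Fintype.card F : ℝ)]
    exact if_pos (Finset.mem_univ x)
  rw [Finset.sum_congr rfl fun x _ => hrow x, Finset.sum_const, Finset.card_univ, nsmul_eq_mul, sq]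

end Moments

section Main

variable {F : Type*} [Field F] [Fintype F] [CharP F 2]

lemma pow_d_bijective {d : ℕ} (hd : 0 < d)
    (hgcd : Nat.gcd d (Fintype.card F - 1) = 1) :
    Function.Bijective (fun x : F => x ^ d) := by
  rw [← Finite.injective_iff_bijective]
  intro x y hxy
  simp only at hxy
  by_cases hx : x = 0
  · subst hx
    rw [zero_pow hd.ne', eq_comm, pow_eq_zero_iff hd.ne'] at hxy
    exact hxy.symm
  by_cases hy : y = 0
  · subst hy
    rw [zero_pow hd.ne', pow_eq_zero_iff hd.ne'] at hxy
    exact absurd hxy hx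
  have hco : (Nat.card Fˣ).Coprime d := by
    rw [Nat.card_eq_fintype_card, Fintype.card_units]
    exact (Nat.coprime_comm).mp hgcd
  have hu : Units.mk0 x hx ^ d = Units.mk0 y hy ^ d := by
    ext
    simpa using hxy
  have := (powCoprime hco).injective hu
  simpa using congrArg Units.val this

/-- the real Weil sum -/
noncomputable def Wr (F : Type*) [Field F] [Fintype F] [CharP F 2] (d : ℕ) (a : F) : ℝ :=
  ∑ x : F, psir F (x ^ d - a * x)

lemma weilSum_eq_Wr (d : ℕ) (a : F) : weilSum F 2 d a = ((Wr F d a : ℝ) : ℂ) := by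
  rw [weilSum, Wr]
  push_cast
  exact Finset.sum_congr rfl fun x _ => canonicalPsi_eq F _

lemma Wr_zero {d : ℕ} (hd : 0 < d) (hgcd : Nat.gcd d (Fintype.card F - 1) = 1) :
    Wr F d 0 = 0 := by
  rw [Wr]
  have h1 : ∀ x : F, x ^ d - 0 * x = x ^ d := by intro x; rw [zero_mul, sub_zero]
  rw [Finset.sum_congr rfl fun x _ => congrArg (psir F) (h1 x)]
  rw [Fintype.sum_bijective _ (pow_d_bijective hd hgcd) _ (fun u => psir F u) fun x => rfl]
  exact sum_psir_eq_zero

lemma sum_V4_eq {d : ℕ} (hd : 0 < d) (hgcd : Nat.gcd d (Fintype.card F - 1) = 1)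
    {b : F} (hb : b ≠ 0) :
    ∑ a : F, (∑ x : F, psir F (b * x ^ d - a * x)) ^ 4 = ∑ a : F, Wr F d a ^ 4 := by
  obtain ⟨c, hc⟩ := (pow_d_bijective hd hgcd).surjective b
  simp only at hc
  have hc0 : c ≠ 0 := by
    intro h
    apply hb
    rw [← hc, h, zero_pow hd.ne']
  have key : ∀ a : F, (∑ x : F, psir F (b * x ^ d - a * x)) = Wr F d (a * c⁻¹) := by
    intro a
    rw [Wr]
    refine Fintype.sum_equiv (Equiv.mulLeft₀ c hc0) _ _ fun u => ?_
    have h1 : (Equiv.mulLeft₀ c hc0) u = c * u := rfl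
    rw [h1]
    congr 1
    have h2 : (c * u) ^ d = b * u ^ d := by rw [mul_pow, hc]
    have h3 : a * c⁻¹ * (c * u) = a * u := by field_simp
    rw [h2, h3]
  rw [Finset.sum_congr rfl fun a _ => congrArg (· ^ 4) (key a)]
  exact Fintype.sum_equiv (Equiv.mulRight₀ c⁻¹ (inv_ne_zero hc0)) _ _ fun a => rfl

lemma sum_V4_zero {d : ℕ} :
    ∑ a : F, (∑ x : F, psir F (0 * x ^ d - a * x)) ^ 4 = (Fintype.card F : ℝ) ^ 4 := by
  have harg : ∀ (a x : F), 0 * x ^ d - a * x = x * a := by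
    intro a x
    rw [zero_mul, zero_sub, CharTwo.neg_eq, mul_comm]
  have key : ∀ a : F, (∑ x : F, psir F (0 * x ^ d - a * x))
      = if a = 0 then (Fintype.card F : ℝ) else 0 := by
    intro a
    rw [Finset.sum_congr rfl fun x _ => congrArg (psir F) (harg a x)]
    exact sum_psir_mul a
  rw [Finset.sum_congr rfl fun a _ => congrArg (· ^ 4) (key a)]
  have key2 : ∀ a : F, (if a = 0 then (Fintype.card F : ℝ) else 0) ^ 4
      = if a = 0 then ((Fintype.card F : ℝ) ^ 4) else 0 := by
    intro a
    split_ifs <;> norm_num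
  rw [Finset.sum_congr rfl fun a _ => key2 a]
  rw [Finset.sum_ite_eq' Finset.univ (0 : F) fun _ => (Fintype.card F : ℝ) ^ 4]
  exact if_pos (Finset.mem_univ _)

/-- the relevant quadruple set -/
noncomputable def quadSet (F : Type*) [Field F] [Fintype F] (d : ℕ) : Finset (F × F × F × F) :=
  Finset.univ.filter
    (fun p => p.1 + p.2.1 + p.2.2.1 + p.2.2.2 = 0
      ∧ p.1 ^ d + p.2.1 ^ d + p.2.2.1 ^ d + p.2.2.2 ^ d = 0)

lemma quad_identity (d : ℕ) :
    ∑ b : F, ∑ a : F, (∑ x : F, psir F (b * x ^ d - a * x)) ^ 4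
      = (Fintype.card F : ℝ) ^ 2 * ((quadSet F d).card : ℝ) := by
  have step1 : ∀ b : F, ∑ a : F, (∑ x : F, psir F (b * x ^ d - a * x)) ^ 4
      = ∑ p : F × F × F × F,
          psir F (b * p.1 ^ d + b * p.2.1 ^ d + b * p.2.2.1 ^ d + b * p.2.2.2 ^ d) *
            (if p.1 + p.2.1 + p.2.2.1 + p.2.2.2 = 0 then (Fintype.card F : ℝ) else 0) :=
    fun b => fourth_moment (fun x => b * x ^ d)
  rw [Finset.sum_congr rfl fun b _ => step1 b, Finset.sum_comm]
  have step2 : ∀ p : F × F × F × F,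
      (∑ b : F,
          psir F (b * p.1 ^ d + b * p.2.1 ^ d + b * p.2.2.1 ^ d + b * p.2.2.2 ^ d) *
            (if p.1 + p.2.1 + p.2.2.1 + p.2.2.2 = 0 then (Fintype.card F : ℝ) else 0))
        = if (p.1 + p.2.1 + p.2.2.1 + p.2.2.2 = 0
            ∧ p.1 ^ d + p.2.1 ^ d + p.2.2.1 ^ d + p.2.2.2 ^ d = 0)
          then (Fintype.card F : ℝ) ^ 2 else 0 := by
    intro p
    have harg : ∀ b : F, b * p.1 ^ d + b * p.2.1 ^ d + b * p.2.2.1 ^ d + b * p.2.2.2 ^ d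
        = b * (p.1 ^ d + p.2.1 ^ d + p.2.2.1 ^ d + p.2.2.2 ^ d) := by
      intro b; ring
    rw [← Finset.sum_mul]
    rw [Finset.sum_congr rfl fun b _ => congrArg (psir F) (harg b), sum_psir_mul]
    split_ifs with h1 h2 h3 h4 h5 <;> first
      | (exfalso; tauto)
      | ring
  rw [Finset.sum_congr rfl fun p _ => step2 p]
  rw [quadSet, ← Finset.sum_filter, Finset.sum_const, nsmul_eq_mul, mul_comm]

end Main

section Count

variable {F : Type*} [Field F] [Fintype F] [CharP F 2]

lemma zsum1 (x z : F) : x + x + z + z = 0 := by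
  have h : x + x + z + z = (x + x) + (z + z) := by ring
  rw [h, CharTwo.add_self_eq_zero, CharTwo.add_self_eq_zero, add_zero]

lemma zsum2 (x z : F) : x + z + x + z = 0 := by
  have h : x + z + x + z = (x + x) + (z + z) := by ring
  rw [h, CharTwo.add_self_eq_zero, CharTwo.add_self_eq_zero, add_zero]

lemma zsum3 (x z : F) : x + z + z + x = 0 := by
  have h : x + z + z + x = (x + x) + (z + z) := by ring
  rw [h, CharTwo.add_self_eq_zero, CharTwo.add_self_eq_zero, add_zero]

lemma quad_card_lower (d : ℕ) :
    3 * (Fintype.card F * Fintype.card F)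
      ≤ (quadSet F d).card + 2 * Fintype.card F := by
  classical
  set q := Fintype.card F
  set A : Finset (F × F × F × F) :=
    Finset.univ.image (fun r : F × F => (r.1, r.1, r.2, r.2)) with hA
  set B : Finset (F × F × F × F) :=
    Finset.univ.image (fun r : F × F => (r.1, r.2, r.1, r.2)) with hB
  set C : Finset (F × F × F × F) :=
    Finset.univ.image (fun r : F × F => (r.1, r.2, r.2, r.1)) with hC
  set D : Finset (F × F × F × F) :=
    Finset.univ.image (fun x : F => (x, x, x, x)) with hD
  have injA : Function.Injective (fun r : F × F => (r.1, r.1, r.2, r.2)) := by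
    intro r s h
    simp only [Prod.mk.injEq] at h
    exact Prod.ext h.1 h.2.2.1
  have injB : Function.Injective (fun r : F × F => (r.1, r.2, r.1, r.2)) := by
    intro r s h
    simp only [Prod.mk.injEq] at h
    exact Prod.ext h.1 h.2.1
  have injC : Function.Injective (fun r : F × F => (r.1, r.2, r.2, r.1)) := by
    intro r s h
    simp only [Prod.mk.injEq] at h
    exact Prod.ext h.1 h.2.1
  have cardA : A.card = q * q := by
    rw [hA, Finset.card_image_of_injective _ injA, Finset.card_univ, Fintype.card_prod]
  have cardB : B.card = q * q := by
    rw [hB, Finset.card_image_of_injective _ injB, Finset.card_univ, Fintype.card_prod]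
  have cardC : C.card = q * q := by
    rw [hC, Finset.card_image_of_injective _ injC, Finset.card_univ, Fintype.card_prod]
  have cardD : D.card ≤ q := by
    calc D.card ≤ (Finset.univ : Finset F).card := Finset.card_image_le
    _ = q := Finset.card_univ
  have hsubA : A ⊆ quadSet F d := by
    rw [hA]
    intro p hp
    rw [Finset.mem_image] at hp
    obtain ⟨r, -, rfl⟩ := hp
    rw [quadSet, Finset.mem_filter]
    exact ⟨Finset.mem_univ _, zsum1 _ _, zsum1 _ _⟩
  have hsubB : B ⊆ quadSet F d := by
    rw [hB]
    intro p hp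
    rw [Finset.mem_image] at hp
    obtain ⟨r, -, rfl⟩ := hp
    rw [quadSet, Finset.mem_filter]
    exact ⟨Finset.mem_univ _, zsum2 _ _, zsum2 _ _⟩
  have hsubC : C ⊆ quadSet F d := by
    rw [hC]
    intro p hp
    rw [Finset.mem_image] at hp
    obtain ⟨r, -, rfl⟩ := hp
    rw [quadSet, Finset.mem_filter]
    exact ⟨Finset.mem_univ _, zsum3 _ _, zsum3 _ _⟩
  have hAB : A ∩ B ⊆ D := by
    intro p hp
    rw [Finset.mem_inter] at hp
    obtain ⟨hpA, hpB⟩ := hp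
    rw [hA, Finset.mem_image] at hpA
    obtain ⟨r, -, rfl⟩ := hpA
    rw [hB, Finset.mem_image] at hpB
    obtain ⟨s, -, hs⟩ := hpB
    simp only [Prod.mk.injEq] at hs
    rw [hD, Finset.mem_image]
    refine ⟨r.1, Finset.mem_univ _, ?_⟩
    have h2 : r.2 = r.1 := by rw [← hs.2.2.1]; exact hs.1
    rw [h2]
  have hABC : (A ∪ B) ∩ C ⊆ D := by
    intro p hp
    rw [Finset.mem_inter, Finset.mem_union] at hp
    obtain ⟨hpAB, hpC⟩ := hp
    rw [hC, Finset.mem_image] at hpC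
    obtain ⟨s, -, rfl⟩ := hpC
    rw [hD, Finset.mem_image]
    rcases hpAB with hpA | hpB
    · rw [hA, Finset.mem_image] at hpA
      obtain ⟨r, -, hr⟩ := hpA
      simp only [Prod.mk.injEq] at hr
      refine ⟨s.1, Finset.mem_univ _, ?_⟩
      have h2 : s.2 = s.1 := by rw [← hr.2.1]; exact hr.1
      rw [h2]
    · rw [hB, Finset.mem_image] at hpB
      obtain ⟨r, -, hr⟩ := hpB
      simp only [Prod.mk.injEq] at hr
      refine ⟨s.1, Finset.mem_univ _, ?_⟩
      have h2 : s.2 = s.1 := by rw [← hr.2.2.1]; exact hr.1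
      rw [h2]
  have hsub : (A ∪ B) ∪ C ⊆ quadSet F d := by
    intro p hp
    rw [Finset.mem_union, Finset.mem_union] at hp
    rcases hp with (h | h) | h
    · exact hsubA h
    · exact hsubB h
    · exact hsubC h
  have h1 : (A ∪ B).card + (A ∩ B).card = A.card + B.card :=
    Finset.card_union_add_card_inter A B
  have h2 : ((A ∪ B) ∪ C).card + ((A ∪ B) ∩ C).card = (A ∪ B).card + C.card :=
    Finset.card_union_add_card_inter (A ∪ B) C
  have hI1 : (A ∩ B).card ≤ q := le_trans (Finset.card_le_card hAB) cardD
  have hI2 : ((A ∪ B) ∩ C).card ≤ q := le_trans (Finset.card_le_card hABC) cardD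
  have hle : ((A ∪ B) ∪ C).card ≤ (quadSet F d).card := Finset.card_le_card hsub
  omega

end Count

/-- In characteristic `2` with `q = 2^n`, `n` odd, there is some nonzero `a ∈ F` such that
`|W_{F,d}(a)| ≥ √(2q)`. -/
theorem exists_abs_weilSum_ge_sqrt_two_card (F : Type*) [Field F] [Fintype F] [CharP F 2]
    (n : ℕ) (hn : Odd n) (hcard : Fintype.card F = 2 ^ n)
    (d : ℕ) (hd : 0 < d) (hgcd : Nat.gcd d (Fintype.card F - 1) = 1) :
    ∃ a : F, a ≠ 0 ∧
      Real.sqrt (2 * Fintype.card F) ≤ ‖weilSum F 2 d a‖ := by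
  classical
  by_contra hcon
  push_neg at hcon
  have hq2 : 2 ≤ Fintype.card F := Fintype.one_lt_card
  set Q : ℝ := (Fintype.card F : ℝ) with hQdef
  have hQ : (2 : ℝ) ≤ Q := by rw [hQdef]; exact_mod_cast hq2
  have hM2 : ∑ a : F, Wr F d a ^ 2 = Q ^ 2 := second_moment (fun x => x ^ d)
  have hW0 : Wr F d 0 = 0 := Wr_zero hd hgcd
  set T : ℝ := ∑ a : F, Wr F d a ^ 4 with hTdef
  have hquad := quad_identity (F := F) d
  have hsplit : ∑ b : F, ∑ a : F, (∑ x : F, psir F (b * x ^ d - a * x)) ^ 4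
      = Q ^ 4 + (Q - 1) * T := by
    rw [← Finset.add_sum_erase _ _ (Finset.mem_univ (0 : F))]
    congr 1
    · exact sum_V4_zero
    · rw [Finset.sum_congr rfl fun b hb => sum_V4_eq hd hgcd (Finset.ne_of_mem_erase hb)]
      rw [Finset.sum_const, Finset.card_erase_of_mem (Finset.mem_univ _), Finset.card_univ,
        nsmul_eq_mul]
      congr 1
      rw [Nat.cast_sub (by omega : 1 ≤ Fintype.card F), hQdef]
      norm_num
  rw [hsplit] at hquad
  have hcount := quad_card_lower (F := F) d
  have hcountR : 3 * (Q * Q) ≤ ((quadSet F d).card : ℝ) + 2 * Q := by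
    rw [hQdef]
    exact_mod_cast hcount
  set NR : ℝ := ((quadSet F d).card : ℝ) with hNRdef
  have hT : 2 * Q ^ 3 ≤ T := by
    have h4 : (0:ℝ) < Q - 1 := by linarith
    have h3 : (Q - 1) * (2 * Q ^ 3) ≤ (Q - 1) * T := by
      nlinarith [hquad, mul_le_mul_of_nonneg_left hcountR (sq_nonneg Q)]
    exact le_of_mul_le_mul_left h3 h4
  have habs : ∀ a : F, ‖weilSum F 2 d a‖ = |Wr F d a| := by
    intro a
    rw [weilSum_eq_Wr, Complex.norm_real, Real.norm_eq_abs]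
  have hlt : ∀ a : F, a ≠ 0 → Wr F d a ^ 2 < 2 * Q := by
    intro a ha
    have h := hcon a ha
    rw [habs] at h
    have hs : Real.sqrt (2 * Q) ^ 2 = 2 * Q := Real.sq_sqrt (by positivity)
    calc Wr F d a ^ 2 = |Wr F d a| ^ 2 := (sq_abs _).symm
      _ < Real.sqrt (2 * Q) ^ 2 := by
          exact pow_lt_pow_left₀ h (abs_nonneg _) (by norm_num)
      _ = 2 * Q := hs
  obtain ⟨a₁, ha₁, hwa₁⟩ : ∃ a : F, a ≠ 0 ∧ Wr F d a ≠ 0 := by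
    by_contra h0
    push_neg at h0
    have hz : ∑ a : F, Wr F d a ^ 2 = 0 := by
      apply Finset.sum_eq_zero
      intro a _
      by_cases ha : a = 0
      · rw [ha, hW0]; ring
      · rw [h0 a ha]; ring
    rw [hM2] at hz
    nlinarith
  have hstrict : T < ∑ a : F, 2 * Q * Wr F d a ^ 2 := by
    rw [hTdef]
    apply Finset.sum_lt_sum
    · intro a _
      by_cases ha : a = 0
      · rw [ha, hW0]; norm_num
      · have h1 : Wr F d a ^ 4 = Wr F d a ^ 2 * Wr F d a ^ 2 := by ring
        rw [h1]
        exact mul_le_mul_of_nonneg_right (le_of_lt (hlt a ha)) (sq_nonneg _)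
    · refine ⟨a₁, Finset.mem_univ _, ?_⟩
      have h1 : Wr F d a₁ ^ 4 = Wr F d a₁ ^ 2 * Wr F d a₁ ^ 2 := by ring
      rw [h1]
      exact mul_lt_mul_of_pos_right (hlt a₁ ha₁) (by positivity)
  rw [← Finset.mul_sum, hM2] at hstrict
  nlinarith [hT, hstrict]
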